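/- Let F be a field and α, β ∈ F^× such that β = x² − α y² for some x, y ∈ F, not both zero. Then there exist γ₁, δ₁, γ₂, δ₂ ∈ F^× such that in K₂F: {α, β} ≡ 2({γ₁, δ₁} + {γ₂, δ₂}) modulo 4K₂F. -/

import Mathlib

open TensorProduct

/-- The Steinberg submodule of `Fˣ ⊗ Fˣ`: spanned by `a ⊗ (1 - a)` for `a ≠ 1`. -/
def steinberg (F : Type*) [Field F] :
    Submodule ℤ (Additive Fˣ ⊗[ℤ] Additive Fˣ) :=
  Submodule.span ℤ
    { z | ∃ (a : Fˣ) (h : (a : F) ≠ 1),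
        z = Additive.ofMul a ⊗ₜ[ℤ]
            Additive.ofMul (Units.mk0 (1 - (a : F)) (sub_ne_zero.mpr h.symm)) }

/-- The Milnor K-group `K₂ F`. -/
def K2 (F : Type*) [Field F] :=
  (Additive Fˣ ⊗[ℤ] Additive Fˣ) ⧸ steinberg F

noncomputable instance (F : Type*) [Field F] : AddCommGroup (K2 F) :=
  inferInstanceAs (AddCommGroup ((Additive Fˣ ⊗[ℤ] Additive Fˣ) ⧸ steinberg F))

/-- The symbol `{a, b}` in `K₂ F`. -/
noncomputable def symbol {F : Type*} [Field F] (a b : Fˣ) : K2 F :=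
  Submodule.Quotient.mk (Additive.ofMul a ⊗ₜ[ℤ] Additive.ofMul b)

section Aux
variable {F : Type*} [Field F]

lemma symbol_mul_left (a b c : Fˣ) : symbol (a * b) c = symbol a c + symbol b c := by
  show (Submodule.Quotient.mk _ : (Additive Fˣ ⊗[ℤ] Additive Fˣ) ⧸ steinberg F) =
    (Submodule.Quotient.mk _ + Submodule.Quotient.mk _ : (Additive Fˣ ⊗[ℤ] Additive Fˣ) ⧸ steinberg F)
  refine Eq.trans ?_ (Submodule.Quotient.mk_add ..)
  congr 1
  rw [show Additive.ofMul (a * b) = Additive.ofMul a + Additive.ofMul b from rfl,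
    TensorProduct.add_tmul]

lemma symbol_mul_right (a b c : Fˣ) : symbol a (b * c) = symbol a b + symbol a c := by
  show (Submodule.Quotient.mk _ : (Additive Fˣ ⊗[ℤ] Additive Fˣ) ⧸ steinberg F) =
    (Submodule.Quotient.mk _ + Submodule.Quotient.mk _ : (Additive Fˣ ⊗[ℤ] Additive Fˣ) ⧸ steinberg F)
  refine Eq.trans ?_ (Submodule.Quotient.mk_add ..)
  congr 1
  rw [show Additive.ofMul (b * c) = Additive.ofMul b + Additive.ofMul c from rfl,
    TensorProduct.tmul_add]

lemma symbol_one_left (b : Fˣ) : symbol (1 : Fˣ) b = 0 := by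
  show Submodule.Quotient.mk _ = 0
  rw [show Additive.ofMul (1 : Fˣ) = 0 from rfl, TensorProduct.zero_tmul]
  exact Submodule.Quotient.mk_zero _

lemma symbol_one_right (a : Fˣ) : symbol a (1 : Fˣ) = 0 := by
  show Submodule.Quotient.mk _ = 0
  rw [show Additive.ofMul (1 : Fˣ) = 0 from rfl, TensorProduct.tmul_zero]
  exact Submodule.Quotient.mk_zero _

lemma symbol_inv_left (a b : Fˣ) : symbol a⁻¹ b = -symbol a b := by
  have h := symbol_mul_left a⁻¹ a b
  rw [inv_mul_cancel, symbol_one_left] at h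
  exact eq_neg_of_add_eq_zero_left h.symm

lemma symbol_inv_right (a b : Fˣ) : symbol a b⁻¹ = -symbol a b := by
  have h := symbol_mul_right a b⁻¹ b
  rw [inv_mul_cancel, symbol_one_right] at h
  exact eq_neg_of_add_eq_zero_left h.symm

lemma symbol_sq_left (a b : Fˣ) : symbol (a ^ 2) b = 2 • symbol a b := by
  rw [sq, symbol_mul_left, two_smul]

lemma symbol_sq_right (a b : Fˣ) : symbol a (b ^ 2) = 2 • symbol a b := by
  rw [sq, symbol_mul_right, two_smul]

lemma steinberg_symbol (a b : Fˣ) (ha : (a : F) ≠ 1) (hb : (b : F) = 1 - (a : F)) :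
    symbol a b = 0 := by
  have hb' : b = Units.mk0 (1 - (a : F)) (sub_ne_zero.mpr ha.symm) := Units.ext hb
  show (Submodule.Quotient.mk _ : (Additive Fˣ ⊗[ℤ] Additive Fˣ) ⧸ steinberg F) = 0
  rw [Submodule.Quotient.mk_eq_zero]
  exact Submodule.subset_span ⟨a, ha, by rw [hb']⟩

lemma symbol_neg_self (a : Fˣ) : symbol a (-a) = 0 := by
  by_cases ha : (a : F) = 1
  · have : a = 1 := Units.ext ha
    subst this
    exact symbol_one_left _
  · have ha0 : (a : F) ≠ 0 := a.ne_zero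
    have hainv : ((a : F))⁻¹ ≠ 1 := by
      rw [ne_eq, inv_eq_one]; exact ha
    set u : Fˣ := Units.mk0 (1 - (a : F)) (sub_ne_zero.mpr (Ne.symm ha)) with hu
    set v : Fˣ := Units.mk0 (1 - ((a : F))⁻¹) (sub_ne_zero.mpr (Ne.symm hainv)) with hv
    have hna : -a = u * v⁻¹ := by
      apply Units.ext
      push_cast [hu, hv, Units.val_mk0]
      have hm1 : (a : F) - 1 ≠ 0 := sub_ne_zero.mpr ha
      field_simp
      ring
    have h1 : symbol a u = 0 := steinberg_symbol a u ha rfl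
    have h2 : symbol a⁻¹ v = 0 := by
      apply steinberg_symbol
      · rwa [Units.val_inv_eq_inv_val]
      · rw [Units.val_inv_eq_inv_val]; rfl
    have h2' : symbol a v = 0 := by
      have := symbol_inv_left a v
      rw [h2] at this
      exact (neg_eq_zero.mp this.symm)
    rw [hna, symbol_mul_right, symbol_inv_right, h1, h2', zero_add, neg_zero]

end Aux

/-- If `β = x² − α y² ≠ 0` with `x, y` not both zero, then there exist
`γ₁, δ₁, γ₂, δ₂ ∈ Fˣ` with `{α, β} ≡ 2({γ₁, δ₁} + {γ₂, δ₂})` modulo `4 K₂F`. -/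
theorem symbol_length_two_mod_four (F : Type*) [Field F] (α β : Fˣ) (x y : F)
    (hxy : ¬ (x = 0 ∧ y = 0)) (hβ : (β : F) = x ^ 2 - (α : F) * y ^ 2) :
    ∃ (γ₁ δ₁ γ₂ δ₂ : Fˣ) (τ : K2 F),
      symbol α β = 2 • (symbol γ₁ δ₁ + symbol γ₂ δ₂) + 4 • τ := by
  by_cases hy : y = 0
  · -- β = x²
    have hx : x ≠ 0 := fun h => hxy ⟨h, hy⟩
    set xu : Fˣ := Units.mk0 x hx with hxu
    have hβu : β = xu ^ 2 := by
      apply Units.ext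
      push_cast [hxu, Units.val_mk0]
      rw [hβ, hy]; ring
    refine ⟨α, xu, 1, 1, 0, ?_⟩
    rw [hβu, symbol_sq_right, symbol_one_left, smul_zero, add_zero, add_zero]
  by_cases hx : x = 0
  · -- β = -α y²
    set yu : Fˣ := Units.mk0 y hy with hyu
    have hβu : β = (-α) * yu ^ 2 := by
      apply Units.ext
      push_cast [hyu, Units.val_mk0]
      rw [hβ, hx]; ring
    refine ⟨α, yu, 1, 1, 0, ?_⟩
    rw [hβu, symbol_mul_right, symbol_sq_right, symbol_neg_self, symbol_one_left,
      smul_zero, add_zero, add_zero, zero_add]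
  · -- general case
    set xu : Fˣ := Units.mk0 x hx with hxu
    set yu : Fˣ := Units.mk0 y hy with hyu
    set cu : Fˣ := xu * yu⁻¹ with hcu
    set u : Fˣ := β * (yu ^ 2)⁻¹ with huu
    have hcval : (cu : F) = x * y⁻¹ := by push_cast [hcu, hxu, hyu]; rfl
    have huval : (u : F) = ((cu : F)) ^ 2 - (α : F) := by
      push_cast [huu, hyu, Units.val_mk0]
      rw [hβ, hcval]
      field_simp
    have hc2ne : ((cu : F)) ^ 2 ≠ (α : F) := by
      intro h
      exact u.ne_zero (by rw [huval, h, sub_self])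
    have ha1 : ((α * (cu ^ 2)⁻¹ : Fˣ) : F) ≠ 1 := by
      push_cast
      intro h
      exact hc2ne ((mul_inv_eq_one₀ (pow_ne_zero 2 cu.ne_zero)).mp h).symm
    have hb1 : ((u * (cu ^ 2)⁻¹ : Fˣ) : F) = 1 - ((α * (cu ^ 2)⁻¹ : Fˣ) : F) := by
      push_cast
      rw [huval]
      field_simp
    have expand : symbol (α * (cu ^ 2)⁻¹) (u * (cu ^ 2)⁻¹) =
        symbol α u - 2 • symbol α cu - 2 • symbol cu u + 4 • symbol cu cu := by
      simp only [symbol_mul_left, symbol_mul_right, symbol_inv_left, symbol_inv_right,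
        symbol_sq_left, symbol_sq_right]
      abel
    have h0 : symbol α u - 2 • symbol α cu - 2 • symbol cu u + 4 • symbol cu cu = 0 := by
      rw [← expand]
      exact steinberg_symbol _ _ ha1 hb1
    have hAu : symbol α u = 2 • symbol α cu + 2 • symbol cu u - 4 • symbol cu cu := by
      have h1 : symbol α u - (2 • symbol α cu + 2 • symbol cu u - 4 • symbol cu cu) =
          symbol α u - 2 • symbol α cu - 2 • symbol cu u + 4 • symbol cu cu := by abel
      have h2 := h1.trans h0
      exact sub_eq_zero.mp h2
    have hβu : β = u * yu ^ 2 := (inv_mul_cancel_right β (yu ^ 2)).symm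
    refine ⟨α, cu * yu, cu, u, -symbol cu cu, ?_⟩
    rw [hβu, symbol_mul_right, symbol_sq_right, hAu, symbol_mul_right α cu yu]
    abel
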